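/- Let f be a matrix Schur function with f(0) = α₀ and Schur transform f₁ with α₁ := f₁(0). Then f has the Taylor expansion f(z) = α₀ + z·ρ₀^R·α₁·ρ₀^L + O(z²) as z → 0, where ρ₀^R := (1-α₀α₀†)^{1/2} and ρ₀^L := (1-α₀†α₀)^{1/2}. -/

import Mathlib

open Matrix Asymptotics Filter
open scoped ComplexOrder Topology

attribute [local instance] Matrix.normedAddCommGroup Matrix.normedSpace

/-- The positive semidefinite square root of a positive semidefinite matrix
(as `Matrix.PosSemidef.sqrt` was defined in Mathlib, December 2024). -/
noncomputable def Matrix.PosSemidef.sqrt {n 𝕜 : Type*} [Fintype n] [DecidableEq n] [RCLike 𝕜]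
    {A : Matrix n n 𝕜} (hA : A.PosSemidef) : Matrix n n 𝕜 :=
  hA.1.eigenvectorUnitary.1 * diagonal ((↑) ∘ (√·) ∘ hA.1.eigenvalues) *
  (star hA.1.eigenvectorUnitary : Matrix n n 𝕜)

lemma Matrix.PosSemidef.sqrt_mul_self {n 𝕜 : Type*} [Fintype n] [DecidableEq n] [RCLike 𝕜]
    {A : Matrix n n 𝕜} (hA : A.PosSemidef) : hA.sqrt * hA.sqrt = A := by
  conv_rhs => rw [hA.1.spectral_theorem]
  rw [Unitary.conjStarAlgAut_apply]
  unfold Matrix.PosSemidef.sqrt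
  have hU : (star hA.1.eigenvectorUnitary : Matrix n n 𝕜) * hA.1.eigenvectorUnitary.1 = 1 :=
    Unitary.star_mul_self_of_mem hA.1.eigenvectorUnitary.2
  simp only [Matrix.mul_assoc]
  rw [← Matrix.mul_assoc (star _) _ (diagonal _ * _), hU, Matrix.one_mul,
    ← Matrix.mul_assoc (diagonal _) (diagonal _), diagonal_mul_diagonal]
  congr 3
  funext i
  simp only [Function.comp_apply]
  rw [← RCLike.ofReal_mul, Real.mul_self_sqrt (hA.eigenvalues_nonneg i)]

private lemma mat_norm_mul_le {p : ℕ} (A B : Matrix (Fin p) (Fin p) ℂ) :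
    ‖A * B‖ ≤ p * ‖A‖ * ‖B‖ := by
  have h0 : (0:ℝ) ≤ p * ‖A‖ * ‖B‖ := by positivity
  rw [Matrix.norm_le_iff h0]
  intro i j
  calc ‖(A * B) i j‖ = ‖∑ k, A i k * B k j‖ := by rw [Matrix.mul_apply]
    _ ≤ ∑ k, ‖A i k * B k j‖ := norm_sum_le _ _
    _ ≤ ∑ _k : Fin p, ‖A‖ * ‖B‖ := Finset.sum_le_sum fun k _ => by
        rw [_root_.norm_mul]
        exact mul_le_mul (Matrix.norm_entry_le_entrywise_sup_norm A)
          (Matrix.norm_entry_le_entrywise_sup_norm B) (norm_nonneg _) (norm_nonneg _)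
    _ = p * ‖A‖ * ‖B‖ := by simp [Finset.sum_const, mul_assoc]

private lemma Asymptotics.IsBigO.matMulO {p : ℕ} {ι : Type*} {l : Filter ι}
    {u v : ι → Matrix (Fin p) (Fin p) ℂ} {g h : ι → ℂ}
    (hu : u =O[l] g) (hv : v =O[l] h) :
    (fun z => u z * v z) =O[l] fun z => g z * h z := by
  have h1 : (fun z => u z * v z) =O[l] fun z => ‖u z‖ * ‖v z‖ :=
    IsBigO.of_bound p <| Eventually.of_forall fun z => by
      have h2 : ‖(‖u z‖ * ‖v z‖)‖ = ‖u z‖ * ‖v z‖ := by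
        rw [_root_.norm_mul, _root_.norm_norm, _root_.norm_norm]
      rw [h2]
      calc ‖u z * v z‖ ≤ p * ‖u z‖ * ‖v z‖ := mat_norm_mul_le (u z) (v z)
        _ = p * (‖u z‖ * ‖v z‖) := by ring
  exact h1.trans (hu.norm_left.mul hv.norm_left)

/-- Taylor expansion of a matrix Schur function:
`f(z) = α₀ + z ρ₀^R α₁ ρ₀^L + O(z²)` with `α₀ = f(0)`, `α₁ = f₁(0)`. -/
theorem schur_function_taylor (p : ℕ)
    (f f₁ : ℂ → Matrix (Fin p) (Fin p) ℂ)
    (hf : AnalyticOnNhd ℂ f (Metric.ball 0 1))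
    (hcontr : ∀ z ∈ Metric.ball (0:ℂ) 1,
      ((1 : Matrix (Fin p) (Fin p) ℂ) - (f z)ᴴ * f z).PosDef)
    (hR : ((1 : Matrix (Fin p) (Fin p) ℂ) - f 0 * (f 0)ᴴ).PosSemidef)
    (hL : ((1 : Matrix (Fin p) (Fin p) ℂ) - (f 0)ᴴ * f 0).PosSemidef)
    (hf₁ : AnalyticOnNhd ℂ f₁ (Metric.ball 0 1))
    (hdef : ∀ z ∈ Metric.ball (0:ℂ) 1, z ≠ 0 →
      f₁ z = z⁻¹ • (hR.sqrt⁻¹ * (f z - f 0) * (1 - (f 0)ᴴ * f z)⁻¹ * hL.sqrt)) :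
    (fun z : ℂ => f z - f 0 - z • (hR.sqrt * f₁ 0 * hL.sqrt))
      =O[nhds 0] fun z : ℂ => z ^ 2 := by
  have h0 : (0:ℂ) ∈ Metric.ball (0:ℂ) 1 := by simp
  set α : Matrix (Fin p) (Fin p) ℂ := f 0 with hα
  set ρR := hR.sqrt with hρRdef
  set ρL := hL.sqrt with hρLdef
  have hL' : ((1 : Matrix (Fin p) (Fin p) ℂ) - αᴴ * α).PosDef := hcontr 0 h0
  have hLdet : ((1 : Matrix (Fin p) (Fin p) ℂ) - αᴴ * α).det ≠ 0 := hL'.det_pos.ne'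
  -- invertibility of ρL
  have hρL : IsUnit ρL.det := by
    have h1 : ρL.det * ρL.det = ((1 : Matrix (Fin p) (Fin p) ℂ) - αᴴ * α).det := by
      rw [← Matrix.det_mul, hL.sqrt_mul_self]
    have : ρL.det ≠ 0 := fun h => hLdet (by rw [← h1, h, mul_zero])
    exact this.isUnit
  -- invertibility of ρR
  have hρR : IsUnit ρR.det := by
    have h1 : ρR.det * ρR.det = ((1 : Matrix (Fin p) (Fin p) ℂ) - α * αᴴ).det := by
      rw [← Matrix.det_mul, hR.sqrt_mul_self]
    have h2 : ((1 : Matrix (Fin p) (Fin p) ℂ) - α * αᴴ).det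
        = ((1 : Matrix (Fin p) (Fin p) ℂ) - αᴴ * α).det := Matrix.det_one_sub_mul_comm α αᴴ
    have : ρR.det ≠ 0 := fun h => hLdet (by rw [← h2, ← h1, h, mul_zero])
    exact this.isUnit
  set C : ℂ → Matrix (Fin p) (Fin p) ℂ := fun z => 1 - αᴴ * f z with hCdef
  set G : ℂ → Matrix (Fin p) (Fin p) ℂ := fun z => ρR * f₁ z * ρL⁻¹ * C z with hGdef
  -- value of G at 0
  have hC0 : C 0 = ρL * ρL := by rw [hCdef, hL.sqrt_mul_self]
  have hG0 : G 0 = ρR * f₁ 0 * ρL := by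
    rw [hGdef]
    simp only [hC0]
    rw [Matrix.mul_assoc (ρR * f₁ 0) ρL⁻¹ (ρL * ρL), ← Matrix.mul_assoc ρL⁻¹ ρL ρL,
      Matrix.nonsing_inv_mul _ hρL, Matrix.one_mul]
  -- continuity facts
  have hfc : ContinuousAt f 0 := (hf 0 h0).continuousAt
  have hCc : ContinuousAt C 0 := by
    have hcont : Continuous (fun M : Matrix (Fin p) (Fin p) ℂ => 1 - αᴴ * M) :=
      continuous_const.sub (continuous_const.matrix_mul continuous_id)
    exact hcont.continuousAt.comp hfc
  have hCu : ∀ᶠ z in 𝓝 (0:ℂ), IsUnit (C z).det := by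
    have hdc : ContinuousAt (fun z => (C z).det) 0 :=
      (Continuous.matrix_det continuous_id).continuousAt.comp hCc
    have hne : (C 0).det ≠ 0 := by rw [hCdef]; exact hLdet
    exact (hdc.tendsto.eventually_ne hne).mono fun z h => h.isUnit
  have hball : ∀ᶠ z in 𝓝 (0:ℂ), z ∈ Metric.ball (0:ℂ) 1 :=
    Metric.isOpen_ball.eventually_mem h0
  -- key identity : f z - α = z • G z near 0
  have keyEq : ∀ᶠ z in 𝓝 (0:ℂ), f z - α = z • G z := by
    filter_upwards [hball, hCu] with z hz1 hz2
    by_cases hz : z = 0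
    · subst hz; simp [hα]
    · rw [hGdef]
      simp only
      rw [hdef z hz1 hz]
      simp only [← hα, ← hρRdef, ← hρLdef, ← hCdef, Matrix.mul_smul, Matrix.smul_mul, smul_smul,
        mul_inv_cancel₀ hz, one_smul]
      rw [← Matrix.mul_assoc ρR, ← Matrix.mul_assoc ρR, ← Matrix.mul_assoc ρR,
        Matrix.mul_nonsing_inv _ hρR, Matrix.one_mul,
        Matrix.mul_assoc _ ρL ρL⁻¹, Matrix.mul_nonsing_inv _ hρL, Matrix.mul_one,
        Matrix.mul_assoc _ (C z)⁻¹ (C z), Matrix.nonsing_inv_mul _ hz2, Matrix.mul_one]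
  -- BigO facts
  have hfd : (fun z => f z - α) =O[𝓝 (0:ℂ)] fun z => z := by
    have := (hf 0 h0).differentiableAt.hasFDerivAt.isBigO_sub
    simpa using this
  have hf₁d : (fun z => f₁ z - f₁ 0) =O[𝓝 (0:ℂ)] fun z => z := by
    have := (hf₁ 0 h0).differentiableAt.hasFDerivAt.isBigO_sub
    simpa using this
  have hconst : ∀ A : Matrix (Fin p) (Fin p) ℂ,
      (fun _ : ℂ => A) =O[𝓝 (0:ℂ)] (fun _ => (1:ℂ)) :=
    fun A => isBigO_const_const A one_ne_zero _
  have hC1 : C =O[𝓝 (0:ℂ)] (fun _ => (1:ℂ)) := hCc.tendsto.isBigO_one ℂ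
  have T1 : (fun z => ρR * (f₁ z - f₁ 0) * ρL⁻¹ * C z) =O[𝓝 (0:ℂ)] fun z => z := by
    have := (((hconst ρR).matMulO hf₁d).matMulO (hconst ρL⁻¹)).matMulO hC1
    simpa using this
  have hCd : (fun z => C z - C 0) =O[𝓝 (0:ℂ)] fun z => z := by
    have heq : ∀ z, C z - C 0 = αᴴ * (-(f z - α)) := fun z => by
      rw [hCdef]; simp only [mul_neg, mul_sub]; abel
    have := (hconst αᴴ).matMulO hfd.neg_left
    simp only [← heq] at this
    simpa using this
  have T2 : (fun z => ρR * f₁ 0 * ρL⁻¹ * (C z - C 0)) =O[𝓝 (0:ℂ)] fun z => z := by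
    have := (hconst (ρR * f₁ 0 * ρL⁻¹)).matMulO hCd
    simpa using this
  have hGd : (fun z => G z - G 0) =O[𝓝 (0:ℂ)] fun z => z := by
    have heq : ∀ z, G z - G 0
        = ρR * (f₁ z - f₁ 0) * ρL⁻¹ * C z + ρR * f₁ 0 * ρL⁻¹ * (C z - C 0) := fun z => by
      rw [hGdef]; simp only; noncomm_ring
    exact (T1.add T2).congr_left fun z => (heq z).symm
  -- assemble
  have hmain : (fun z : ℂ => z • (G z - G 0)) =O[𝓝 (0:ℂ)] fun z => z * z := by
    have := (isBigO_refl (fun z : ℂ => z) (𝓝 0)).smul hGd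
    simpa [smul_eq_mul] using this
  have final : ∀ᶠ z in 𝓝 (0:ℂ), z • (G z - G 0) = f z - f 0 - z • (ρR * f₁ 0 * ρL) := by
    filter_upwards [keyEq] with z hz
    rw [smul_sub, ← hz, hG0, ← hα]
  exact (hmain.congr' final (Eventually.of_forall fun z => (sq z).symm))
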